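/- Let k ≥ 2 and ρ > 0. Then there exist δ > 0, ρ' with 0 < ρ' < ρ, and real numbers 0 < s < r < 1 with r² < s, such that every injective holomorphic map F : B_ρ → ℂ^k (Differentiable over ℂ on the open ball B_ρ) with F(0) = 0 and ‖F(z) − z/2‖ < δ for all z ∈ B_ρ satisfies s‖z‖ ≤ ‖F(z)‖ ≤ r‖z‖ for all z ∈ B_{ρ'}. -/

import Mathlib

open Metric Set Filter

noncomputable section

lemma schwarz_line {k : ℕ} {ρ δ : ℝ} (_hρ : 0 < ρ)
    (G : EuclideanSpace ℂ (Fin k) → EuclideanSpace ℂ (Fin k))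
    (hd : DifferentiableOn ℂ G (Metric.ball 0 ρ)) (h0 : G 0 = 0)
    (hb : ∀ z ∈ Metric.ball (0 : EuclideanSpace ℂ (Fin k)) ρ, ‖G z‖ < δ) :
    ∀ z ∈ Metric.ball (0 : EuclideanSpace ℂ (Fin k)) ρ, ‖G z‖ ≤ δ / ρ * ‖z‖ := by
  intro z hz
  rcases eq_or_ne z 0 with rfl | hne
  · simp [h0]
  have hznorm : (0:ℝ) < ‖z‖ := norm_pos_iff.2 hne
  set u : EuclideanSpace ℂ (Fin k) := ((‖z‖ : ℂ))⁻¹ • z with hu_def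
  have hu : ‖u‖ = 1 := by
    rw [hu_def, norm_smul]
    simp [Complex.norm_real, abs_of_pos hznorm, inv_mul_cancel₀ hznorm.ne']
  have hLnorm : ∀ w : ℂ, ‖w • u‖ = ‖w‖ := by
    intro w; rw [norm_smul, hu, mul_one]
  set g : ℂ → EuclideanSpace ℂ (Fin k) := fun w => G (w • u) with hg_def
  have hmapsL : Set.MapsTo (fun w : ℂ => w • u) (Metric.ball 0 ρ)
      (Metric.ball (0 : EuclideanSpace ℂ (Fin k)) ρ) := by
    intro w hw
    rw [mem_ball_zero_iff, hLnorm]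
    exact mem_ball_zero_iff.1 hw
  have hdg : DifferentiableOn ℂ g (Metric.ball 0 ρ) :=
    hd.comp ((differentiable_id.smul_const u).differentiableOn) hmapsL
  have hg0 : g 0 = 0 := by simp [hg_def, h0]
  have hmapsg : Set.MapsTo g (Metric.ball 0 ρ)
      (Metric.ball (g 0) δ) := by
    intro w hw
    rw [hg0, mem_ball_zero_iff]
    exact hb _ (hmapsL hw)
  have hwz : ((‖z‖ : ℂ)) ∈ Metric.ball (0:ℂ) ρ := by
    rw [mem_ball_zero_iff]
    simpa [abs_of_pos hznorm] using mem_ball_zero_iff.1 hz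
  have key := Complex.dist_le_div_mul_dist_of_mapsTo_ball hdg (hmapsg.mono_right ball_subset_closedBall) hwz
  have hzz : ((‖z‖ : ℂ)) • u = z := by
    rw [hu_def, smul_smul, mul_inv_cancel₀ (by exact_mod_cast hznorm.ne'), one_smul]
  rw [hg0, dist_zero_right, dist_zero_right, hg_def] at key
  simpa [hzz, abs_of_pos hznorm] using key

theorem near_half_contraction_satisfies_bounds (k : ℕ) (hk : 2 ≤ k) (ρ : ℝ) (hρ : 0 < ρ) :
    ∃ δ > (0 : ℝ), ∃ ρ' : ℝ, 0 < ρ' ∧ ρ' < ρ ∧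
      ∃ s r : ℝ, 0 < s ∧ s < r ∧ r < 1 ∧ r ^ 2 < s ∧
        ∀ F : EuclideanSpace ℂ (Fin k) → EuclideanSpace ℂ (Fin k),
          DifferentiableOn ℂ F (Metric.ball 0 ρ) →
          Set.InjOn F (Metric.ball 0 ρ) →
          F 0 = 0 →
          (∀ z ∈ Metric.ball (0 : EuclideanSpace ℂ (Fin k)) ρ,
            ‖F z - (2⁻¹ : ℂ) • z‖ < δ) →
          ∀ z ∈ Metric.ball (0 : EuclideanSpace ℂ (Fin k)) ρ',
            s * ‖z‖ ≤ ‖F z‖ ∧ ‖F z‖ ≤ r * ‖z‖ := by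
  refine ⟨ρ / 100, by positivity, ρ / 2, by positivity, by linarith, 0.4, 0.6,
    by norm_num, by norm_num, by norm_num, by norm_num, ?_⟩
  intro F hdF _hinj hF0 hδ z hz
  have hG : DifferentiableOn ℂ (fun z => F z - (2⁻¹ : ℂ) • z) (Metric.ball 0 ρ) :=
    hdF.sub ((differentiable_id.const_smul (2⁻¹ : ℂ)).differentiableOn)
  have hG0 : F 0 - (2⁻¹ : ℂ) • (0 : EuclideanSpace ℂ (Fin k)) = 0 := by simp [hF0]
  have hz' : z ∈ Metric.ball (0 : EuclideanSpace ℂ (Fin k)) ρ :=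
    Metric.ball_subset_ball (by linarith) hz
  have key := schwarz_line hρ (fun z => F z - (2⁻¹ : ℂ) • z) hG hG0 hδ z hz'
  have hdiv : ρ / 100 / ρ = 1 / 100 := by field_simp
  rw [hdiv] at key
  have hhalf : ‖(2⁻¹ : ℂ) • z‖ = 2⁻¹ * ‖z‖ := by
    rw [norm_smul]; norm_num
  have h1 : ‖F z‖ ≤ ‖(2⁻¹ : ℂ) • z‖ + ‖F z - (2⁻¹ : ℂ) • z‖ := by
    have := norm_add_le ((2⁻¹ : ℂ) • z) (F z - (2⁻¹ : ℂ) • z)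
    simpa using this
  have h2 : ‖(2⁻¹ : ℂ) • z‖ - ‖F z - (2⁻¹ : ℂ) • z‖ ≤ ‖F z‖ := by
    have := norm_sub_le (F z) (F z - (2⁻¹ : ℂ) • z)
    rw [sub_sub_cancel] at this
    linarith [this]
  constructor
  · rw [hhalf] at h2; nlinarith
  · rw [hhalf] at h1; nlinarith
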